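/- Let k ∈ ℕ and m ≥ 1 be an integer. There exist real coefficients α̂_0, α̂_1, …, α̂_m (depending on k, m) such that for all t ∈ ℝ, 2·T_{k+2m}(t) = ∑_{j=0}^{m} α̂_j · C^{m}_{k+2(m−j)}(t), and the last coefficient is α̂_m = (−1)^m · Γ(m) · Γ(k+m+1)/Γ(k+2m), where T_p denotes the Chebyshev polynomial of the first kind of degree p. -/

import Mathlib

/-- The Gegenbauer polynomial `C_k^λ(z)` given by its explicit sum. -/
noncomputable def gegenbauer (k : ℕ) (l : ℝ) (z : ℝ) : ℝ :=
  ∑ j ∈ Finset.range (k / 2 + 1),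
    (-1 : ℝ) ^ j * (Real.Gamma ((k : ℝ) - j + l) /
      (Real.Gamma l * (Nat.factorial j) * (Nat.factorial (k - 2 * j)))) * (2 * z) ^ (k - 2 * j)

lemma fac_cast_gamma (a b : ℕ) (h : b ≤ a) :
    Real.Gamma ((a:ℝ) - b + 1) = (Nat.factorial (a - b) : ℝ) := by
  rw [show (a:ℝ) - b + 1 = ((a - b : ℕ):ℝ) + 1 by rw [Nat.cast_sub h], Real.Gamma_nat_eq_factorial]

lemma key1 (j A : ℕ) (t : ℝ) :
    (-1:ℝ)^(j+1) * ((Nat.factorial (j+A+2) : ℝ) /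
        (1 * (Nat.factorial (j+1)) * (Nat.factorial (A+1)))) * (2*t)^(A+1)
      = 2*t * ((-1:ℝ)^(j+1) * ((Nat.factorial (j+A+1) : ℝ) /
          (1 * (Nat.factorial (j+1)) * (Nat.factorial A))) * (2*t)^A)
        - (-1:ℝ)^j * ((Nat.factorial (j+A+1) : ℝ) /
          (1 * (Nat.factorial j) * (Nat.factorial (A+1)))) * (2*t)^(A+1) := by
  rw [show Nat.factorial (j+A+2) = (j+A+2) * Nat.factorial (j+A+1) from Nat.factorial_succ (j+A+1),
    show Nat.factorial (j+1) = (j+1) * Nat.factorial j from Nat.factorial_succ j,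
    show Nat.factorial (A+1) = (A+1) * Nat.factorial A from Nat.factorial_succ A, pow_succ]
  have hj : (Nat.factorial j : ℝ) ≠ 0 := Nat.cast_ne_zero.2 (Nat.factorial_ne_zero j)
  have hA : (Nat.factorial A : ℝ) ≠ 0 := Nat.cast_ne_zero.2 (Nat.factorial_ne_zero A)
  have h1 : ((j:ℝ)+1) ≠ 0 := by positivity
  have h2 : ((A:ℝ)+1) ≠ 0 := by positivity
  push_cast
  field_simp
  ring

lemma term_id (n j : ℕ) (h : 2*j + 2 ≤ n + 1) (t : ℝ) :
    (-1:ℝ)^(j+1) * (Real.Gamma (((n+2:ℕ):ℝ) - ((j+1:ℕ):ℝ) + 1) /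
        (Real.Gamma 1 * (Nat.factorial (j+1)) * (Nat.factorial ((n+2) - 2*(j+1))))) *
        (2*t)^((n+2) - 2*(j+1))
      = 2*t * ((-1:ℝ)^(j+1) * (Real.Gamma (((n+1:ℕ):ℝ) - ((j+1:ℕ):ℝ) + 1) /
          (Real.Gamma 1 * (Nat.factorial (j+1)) * (Nat.factorial ((n+1) - 2*(j+1))))) *
          (2*t)^((n+1) - 2*(j+1)))
        - (-1:ℝ)^j * (Real.Gamma (((n:ℕ):ℝ) - ((j:ℕ):ℝ) + 1) /
          (Real.Gamma 1 * (Nat.factorial j) * (Nat.factorial (n - 2*j)))) * (2*t)^(n - 2*j) := by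
  obtain ⟨A, rfl⟩ : ∃ A, n = 2*j + 1 + A := ⟨n - (2*j+1), by omega⟩
  rw [Real.Gamma_one,
    fac_cast_gamma (2*j+1+A+2) (j+1) (by omega),
    fac_cast_gamma (2*j+1+A+1) (j+1) (by omega),
    fac_cast_gamma (2*j+1+A) j (by omega),
    show (2*j+1+A+2) - (j+1) = j+A+2 by omega,
    show (2*j+1+A+2) - 2*(j+1) = A+1 by omega,
    show (2*j+1+A+1) - (j+1) = j+A+1 by omega,
    show (2*j+1+A+1) - 2*(j+1) = A by omega,
    show (2*j+1+A) - j = j+A+1 by omega,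
    show (2*j+1+A) - 2*j = A+1 by omega]
  exact key1 j A t

lemma geg_rec (n : ℕ) (t : ℝ) :
    gegenbauer (n+2) 1 t = 2*t*gegenbauer (n+1) 1 t - gegenbauer n 1 t := by
  rcases Nat.even_or_odd n with ⟨a, rfl⟩ | ⟨a, rfl⟩
  · have hn : a + a = 2*a := by ring
    rw [hn]
    simp only [gegenbauer]
    rw [show (2*a+2)/2 + 1 = a+2 by omega, show (2*a+1)/2 + 1 = a+1 by omega,
      show (2*a)/2 + 1 = a+1 by omega]
    rw [Finset.sum_range_succ' _ (a+1), Finset.sum_range_succ _ a,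
      Finset.mul_sum, Finset.sum_range_succ' _ a, Finset.sum_range_succ _ a]
    have hmain : ∀ j ∈ Finset.range a,
        (-1:ℝ)^(j+1) * (Real.Gamma (((2*a+2:ℕ):ℝ) - ((j+1:ℕ):ℝ) + 1) /
          (Real.Gamma 1 * (Nat.factorial (j+1)) * (Nat.factorial ((2*a+2) - 2*(j+1))))) *
          (2*t)^((2*a+2) - 2*(j+1))
        = (2*t * ((-1:ℝ)^(j+1) * (Real.Gamma (((2*a+1:ℕ):ℝ) - ((j+1:ℕ):ℝ) + 1) /
            (Real.Gamma 1 * (Nat.factorial (j+1)) * (Nat.factorial ((2*a+1) - 2*(j+1))))) *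
            (2*t)^((2*a+1) - 2*(j+1))))
          - (-1:ℝ)^j * (Real.Gamma (((2*a:ℕ):ℝ) - ((j:ℕ):ℝ) + 1) /
            (Real.Gamma 1 * (Nat.factorial j) * (Nat.factorial ((2*a) - 2*j)))) *
            (2*t)^((2*a) - 2*j) := by
      intro j hj
      exact term_id (2*a) j (by simp at hj; omega) t
    rw [Finset.sum_congr rfl hmain, Finset.sum_sub_distrib]
    have e1 : (-1:ℝ)^(a+1) * (Real.Gamma (((2*a+2:ℕ):ℝ) - ((a+1:ℕ):ℝ) + 1) /
          (Real.Gamma 1 * (Nat.factorial (a+1)) * (Nat.factorial ((2*a+2) - 2*(a+1))))) *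
          (2*t)^((2*a+2) - 2*(a+1))
        = - ((-1:ℝ)^a * (Real.Gamma (((2*a:ℕ):ℝ) - ((a:ℕ):ℝ) + 1) /
          (Real.Gamma 1 * (Nat.factorial a) * (Nat.factorial ((2*a) - 2*a)))) *
          (2*t)^((2*a) - 2*a)) := by
      rw [Real.Gamma_one, fac_cast_gamma (2*a+2) (a+1) (by omega), fac_cast_gamma (2*a) a (by omega),
        show (2*a+2) - (a+1) = a+1 by omega, show (2*a+2) - 2*(a+1) = 0 by omega,
        show (2*a) - a = a by omega, show (2*a) - 2*a = 0 by omega,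
        show Nat.factorial (a+1) = (a+1) * Nat.factorial a from Nat.factorial_succ a]
      have : (Nat.factorial a : ℝ) ≠ 0 := Nat.cast_ne_zero.2 (Nat.factorial_ne_zero a)
      push_cast
      field_simp
      ring
    have e0 : (-1:ℝ)^0 * (Real.Gamma (((2*a+2:ℕ):ℝ) - ((0:ℕ):ℝ) + 1) /
          (Real.Gamma 1 * (Nat.factorial 0) * (Nat.factorial ((2*a+2) - 2*0)))) *
          (2*t)^((2*a+2) - 2*0)
        = 2*t * ((-1:ℝ)^0 * (Real.Gamma (((2*a+1:ℕ):ℝ) - ((0:ℕ):ℝ) + 1) /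
          (Real.Gamma 1 * (Nat.factorial 0) * (Nat.factorial ((2*a+1) - 2*0)))) *
          (2*t)^((2*a+1) - 2*0)) := by
      rw [Real.Gamma_one, fac_cast_gamma (2*a+2) 0 (by omega), fac_cast_gamma (2*a+1) 0 (by omega)]
      simp only [Nat.sub_zero, Nat.mul_zero, Nat.factorial_zero]
      have h1 : (Nat.factorial (2*a+2) : ℝ) ≠ 0 := Nat.cast_ne_zero.2 (Nat.factorial_ne_zero _)
      have h2 : (Nat.factorial (2*a+1) : ℝ) ≠ 0 := Nat.cast_ne_zero.2 (Nat.factorial_ne_zero _)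
      rw [show (2*a+2) = (2*a+1)+1 from rfl, pow_succ]
      field_simp
    rw [e1, e0]
    ring
  · simp only [gegenbauer]
    rw [show (2*a+1+2)/2 + 1 = a+2 by omega, show (2*a+1+1)/2 + 1 = a+2 by omega,
      show (2*a+1)/2 + 1 = a+1 by omega]
    rw [Finset.sum_range_succ' _ (a+1), Finset.mul_sum, Finset.sum_range_succ' _ (a+1)]
    have hmain : ∀ j ∈ Finset.range (a+1),
        (-1:ℝ)^(j+1) * (Real.Gamma (((2*a+1+2:ℕ):ℝ) - ((j+1:ℕ):ℝ) + 1) /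
          (Real.Gamma 1 * (Nat.factorial (j+1)) * (Nat.factorial ((2*a+1+2) - 2*(j+1))))) *
          (2*t)^((2*a+1+2) - 2*(j+1))
        = (2*t * ((-1:ℝ)^(j+1) * (Real.Gamma (((2*a+1+1:ℕ):ℝ) - ((j+1:ℕ):ℝ) + 1) /
            (Real.Gamma 1 * (Nat.factorial (j+1)) * (Nat.factorial ((2*a+1+1) - 2*(j+1))))) *
            (2*t)^((2*a+1+1) - 2*(j+1))))
          - (-1:ℝ)^j * (Real.Gamma (((2*a+1:ℕ):ℝ) - ((j:ℕ):ℝ) + 1) /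
            (Real.Gamma 1 * (Nat.factorial j) * (Nat.factorial ((2*a+1) - 2*j)))) *
            (2*t)^((2*a+1) - 2*j) := by
      intro j hj
      exact term_id (2*a+1) j (by simp at hj; omega) t
    rw [Finset.sum_congr rfl hmain, Finset.sum_sub_distrib]
    have e0 : (-1:ℝ)^0 * (Real.Gamma (((2*a+1+2:ℕ):ℝ) - ((0:ℕ):ℝ) + 1) /
          (Real.Gamma 1 * (Nat.factorial 0) * (Nat.factorial ((2*a+1+2) - 2*0)))) *
          (2*t)^((2*a+1+2) - 2*0)
        = 2*t * ((-1:ℝ)^0 * (Real.Gamma (((2*a+1+1:ℕ):ℝ) - ((0:ℕ):ℝ) + 1) /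
          (Real.Gamma 1 * (Nat.factorial 0) * (Nat.factorial ((2*a+1+1) - 2*0)))) *
          (2*t)^((2*a+1+1) - 2*0)) := by
      rw [Real.Gamma_one, fac_cast_gamma (2*a+1+2) 0 (by omega), fac_cast_gamma (2*a+1+1) 0 (by omega)]
      simp only [Nat.sub_zero, Nat.mul_zero, Nat.factorial_zero]
      have h1 : (Nat.factorial (2*a+1+2) : ℝ) ≠ 0 := Nat.cast_ne_zero.2 (Nat.factorial_ne_zero _)
      have h2 : (Nat.factorial (2*a+1+1) : ℝ) ≠ 0 := Nat.cast_ne_zero.2 (Nat.factorial_ne_zero _)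
      rw [show (2*a+1+2) = (2*a+1+1)+1 from rfl, pow_succ]
      field_simp
    rw [e0]
    ring

lemma gam3 : Real.Gamma (2 + 1 : ℝ) = 2 := by
  rw [Real.Gamma_add_one (by norm_num), Real.Gamma_two]; norm_num

lemma gam4 : Real.Gamma (3 + 1 : ℝ) = 6 := by
  rw [Real.Gamma_add_one (by norm_num), show (3:ℝ) = 2 + 1 by norm_num, gam3]; norm_num

lemma geg0 (t : ℝ) : gegenbauer 0 1 t = 1 := by
  simp [gegenbauer, Real.Gamma_one]

lemma geg1 (t : ℝ) : gegenbauer 1 1 t = 2 * t := by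
  simp [gegenbauer, Finset.sum_range_succ, Real.Gamma_one]
  rw [show (1:ℝ)+1 = 2 by norm_num, Real.Gamma_two]; ring

lemma geg2 (t : ℝ) : gegenbauer 2 1 t = 4 * t^2 - 1 := by
  simp [gegenbauer, Finset.sum_range_succ, Real.Gamma_one, Nat.factorial]
  rw [gam3]; ring

lemma geg3 (t : ℝ) : gegenbauer 3 1 t = 8 * t^3 - 4 * t := by
  simp [gegenbauer, Finset.sum_range_succ, Real.Gamma_one, Nat.factorial]
  rw [gam4]; ring

lemma TU (n : ℕ) (t : ℝ) :
    2 * (Polynomial.Chebyshev.T ℝ ((n:ℤ)+2)).eval t = gegenbauer (n+2) 1 t - gegenbauer n 1 t := by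
  induction n using Nat.twoStepInduction with
  | zero =>
    have h2 : (Polynomial.Chebyshev.T ℝ 2).eval t = 2*t^2 - 1 := by
      simp [Polynomial.Chebyshev.T_two]
    norm_num [h2, geg2, geg0]; ring
  | one =>
    have h3 := Polynomial.Chebyshev.T_add_two ℝ 1
    have h3' : (Polynomial.Chebyshev.T ℝ 3).eval t = 4*t^3 - 3*t := by
      rw [show (3:ℤ) = 1+2 by norm_num, h3]
      simp [Polynomial.Chebyshev.T_two, Polynomial.Chebyshev.T_one]
      ring
    norm_num [h3', geg3, geg1]; ring
  | more n ih1 ih2 =>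
    have hT := Polynomial.Chebyshev.T_add_two ℝ ((n:ℤ)+2)
    have e : ((n+2:ℕ):ℤ) + 2 = (n:ℤ)+2+2 := by push_cast; ring
    rw [e, hT]
    have e1 : ((n+1:ℕ):ℤ) + 2 = (n:ℤ)+2+1 := by push_cast; ring
    rw [e1] at ih2
    simp only [Polynomial.eval_sub, Polynomial.eval_mul, Polynomial.eval_ofNat, Polynomial.eval_X]
    have r1 := geg_rec (n+2) t
    have r2 := geg_rec n t
    rw [show n+2+2 = n+4 from rfl, show n+2+1 = n+3 from rfl] at r1
    have hthis : (2:ℝ) * (Polynomial.Chebyshev.T ℝ ((n:ℤ)+2+1)).eval t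
        = gegenbauer (n+3) 1 t - gegenbauer (n+1) 1 t := by
      rw [show n+3 = (n+1)+2 from rfl] at *
      exact ih2
    rw [show n+2+2 = n+4 from rfl]
    linear_combination 2*t*hthis - ih1 - r1 + r2

lemma step_term (n j : ℕ) (l : ℝ) (hl : 0 < l) (hj : 2*j ≤ n) (t : ℝ) :
    (-1:ℝ)^(j+1) * (Real.Gamma (((n+2:ℕ):ℝ) - ((j+1:ℕ):ℝ) + (l+1)) /
        (Real.Gamma (l+1) * (Nat.factorial (j+1)) * (Nat.factorial ((n+2) - 2*(j+1))))) *
        (2*t)^((n+2) - 2*(j+1))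
      - (-1:ℝ)^j * (Real.Gamma ((n:ℝ) - (j:ℝ) + (l+1)) /
        (Real.Gamma (l+1) * (Nat.factorial j) * (Nat.factorial (n - 2*j)))) * (2*t)^(n - 2*j)
    = (((n:ℝ)+2+l)/l) * ((-1:ℝ)^(j+1) * (Real.Gamma (((n+2:ℕ):ℝ) - ((j+1:ℕ):ℝ) + l) /
        (Real.Gamma l * (Nat.factorial (j+1)) * (Nat.factorial ((n+2) - 2*(j+1))))) *
        (2*t)^((n+2) - 2*(j+1))) := by
  rw [show (n+2) - 2*(j+1) = n - 2*j by omega]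
  have hjn : (j:ℝ) ≤ n := by exact_mod_cast le_trans (by omega) hj
  have e1 : ((n+2:ℕ):ℝ) - ((j+1:ℕ):ℝ) + (l+1) = ((n:ℝ) - j + l + 1) + 1 := by push_cast; ring
  have e2 : (n:ℝ) - (j:ℝ) + (l+1) = ((n:ℝ) - j + l) + 1 := by ring
  have e3 : ((n+2:ℕ):ℝ) - ((j+1:ℕ):ℝ) + l = ((n:ℝ) - j + l) + 1 := by push_cast; ring
  have hu : (n:ℝ) - j + l ≠ 0 := by
    have : (0:ℝ) ≤ (n:ℝ) - j := by linarith
    positivity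
  have hu1 : (n:ℝ) - j + l + 1 ≠ 0 := by
    have : (0:ℝ) ≤ (n:ℝ) - j := by linarith
    positivity
  rw [e1, e2, e3, Real.Gamma_add_one hu1, Real.Gamma_add_one hu,
    Real.Gamma_add_one (ne_of_gt hl),
    show Nat.factorial (j+1) = (j+1) * Nat.factorial j from Nat.factorial_succ j]
  have hG : Real.Gamma l ≠ 0 := ne_of_gt (Real.Gamma_pos_of_pos hl)
  have hfj : (Nat.factorial j : ℝ) ≠ 0 := Nat.cast_ne_zero.2 (Nat.factorial_ne_zero j)
  have hfn : (Nat.factorial (n - 2*j) : ℝ) ≠ 0 := Nat.cast_ne_zero.2 (Nat.factorial_ne_zero _)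
  have hl' : l ≠ 0 := ne_of_gt hl
  have hj1 : ((j:ℝ)+1) ≠ 0 := by positivity
  push_cast
  field_simp
  ring

lemma step_term0 (n : ℕ) (l : ℝ) (hl : 0 < l) (t : ℝ) :
    (-1:ℝ)^0 * (Real.Gamma (((n+2:ℕ):ℝ) - ((0:ℕ):ℝ) + (l+1)) /
        (Real.Gamma (l+1) * (Nat.factorial 0) * (Nat.factorial ((n+2) - 2*0)))) *
        (2*t)^((n+2) - 2*0)
    = (((n:ℝ)+2+l)/l) * ((-1:ℝ)^0 * (Real.Gamma (((n+2:ℕ):ℝ) - ((0:ℕ):ℝ) + l) /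
        (Real.Gamma l * (Nat.factorial 0) * (Nat.factorial ((n+2) - 2*0)))) *
        (2*t)^((n+2) - 2*0)) := by
  have e1 : ((n+2:ℕ):ℝ) - ((0:ℕ):ℝ) + (l+1) = ((n:ℝ) + 2 + l) + 1 := by push_cast; ring
  have e3 : ((n+2:ℕ):ℝ) - ((0:ℕ):ℝ) + l = (n:ℝ) + 2 + l := by push_cast; ring
  have hu : (n:ℝ) + 2 + l ≠ 0 := by positivity
  rw [e1, e3, Real.Gamma_add_one hu, Real.Gamma_add_one (ne_of_gt hl)]
  have hG : Real.Gamma l ≠ 0 := ne_of_gt (Real.Gamma_pos_of_pos hl)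
  have hfn : (Nat.factorial ((n+2) - 2*0) : ℝ) ≠ 0 := Nat.cast_ne_zero.2 (Nat.factorial_ne_zero _)
  have hl' : l ≠ 0 := ne_of_gt hl
  field_simp

lemma geg_step (n : ℕ) (l : ℝ) (hl : 0 < l) (t : ℝ) :
    gegenbauer (n+2) (l+1) t - gegenbauer n (l+1) t
      = (((n:ℝ)+2+l)/l) * gegenbauer (n+2) l t := by
  simp only [gegenbauer]
  rw [show (n+2)/2 + 1 = n/2+2 by omega]
  rw [Finset.mul_sum]
  rw [Finset.sum_range_succ' _ (n/2+1), Finset.sum_range_succ' (fun j => (((n:ℝ)+2+l)/l) *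
    ((-1:ℝ)^j * (Real.Gamma (((n+2:ℕ):ℝ) - (j:ℝ) + l) /
      (Real.Gamma l * (Nat.factorial j) * (Nat.factorial ((n+2) - 2*j)))) *
      (2*t)^((n+2) - 2*j))) (n/2+1)]
  have hmain : ∀ j ∈ Finset.range (n/2+1),
      (-1:ℝ)^(j+1) * (Real.Gamma (((n+2:ℕ):ℝ) - ((j+1:ℕ):ℝ) + (l+1)) /
        (Real.Gamma (l+1) * (Nat.factorial (j+1)) * (Nat.factorial ((n+2) - 2*(j+1))))) *
        (2*t)^((n+2) - 2*(j+1))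
      - (-1:ℝ)^j * (Real.Gamma ((n:ℝ) - (j:ℝ) + (l+1)) /
        (Real.Gamma (l+1) * (Nat.factorial j) * (Nat.factorial (n - 2*j)))) * (2*t)^(n - 2*j)
      = (((n:ℝ)+2+l)/l) * ((-1:ℝ)^(j+1) * (Real.Gamma (((n+2:ℕ):ℝ) - ((j+1:ℕ):ℝ) + l) /
        (Real.Gamma l * (Nat.factorial (j+1)) * (Nat.factorial ((n+2) - 2*(j+1))))) *
        (2*t)^((n+2) - 2*(j+1))) := by
    intro j hj
    exact step_term n j l hl (by simp at hj; omega) t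
  have hsum := Finset.sum_congr rfl hmain
  rw [Finset.sum_sub_distrib] at hsum
  rw [step_term0 n l hl t]
  linarith [hsum]

/-- `2 T_{k+2m}` expands in the `C^m` family with explicit last
coefficient `α̂_m = (-1)^m Γ(m) Γ(k+m+1)/Γ(k+2m)`. -/
theorem stmt5 (k m : ℕ) (hm : 1 ≤ m) :
    ∃ α : ℕ → ℝ,
      (∀ t : ℝ, 2 * (Polynomial.Chebyshev.T ℝ (k + 2 * m : ℕ)).eval t =
        ∑ j ∈ Finset.range (m + 1), α j * gegenbauer (k + 2 * (m - j)) (m : ℝ) t) ∧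
      α m = (-1 : ℝ) ^ m * Real.Gamma m *
        (Real.Gamma ((k : ℝ) + m + 1) / Real.Gamma ((k : ℝ) + 2 * m)) := by
  have hKM : (0:ℝ) < (k:ℝ) + 2*m := by
    have : (1:ℝ) ≤ (m:ℝ) := by exact_mod_cast hm
    positivity
  have hGKM : Real.Gamma ((k:ℝ) + 2*m) ≠ 0 := ne_of_gt (Real.Gamma_pos_of_pos hKM)
  have main : ∀ i, 1 ≤ i → i ≤ m → ∃ β : ℕ → ℝ,
      (∀ t : ℝ, 2 * (Polynomial.Chebyshev.T ℝ (k + 2 * m : ℕ)).eval t =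
        ∑ j ∈ Finset.range (i + 1), β j * gegenbauer (k + 2*m - 2*j) (i : ℝ) t) ∧
      β i = (-1 : ℝ) ^ i * Real.Gamma i *
        (Real.Gamma ((k : ℝ) + 2*m - i + 1) / Real.Gamma ((k : ℝ) + 2 * m)) := by
    intro i
    induction i with
    | zero => intro h; omega
    | succ i ih =>
      intro _ hi1
      by_cases hi0 : i = 0
      · -- base case: i+1 = 1
        subst hi0
        refine ⟨fun j => if j = 0 then 1 else -1, ?_, ?_⟩
        · intro t
          have hTU := TU (k+2*m-2) t
          rw [show k+2*m-2+2 = k+2*m by omega] at hTU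
          rw [show ((k+2*m-2:ℕ):ℤ)+2 = ((k+2*m:ℕ):ℤ) by omega] at hTU
          rw [Finset.sum_range_succ, Finset.sum_range_succ, Finset.sum_range_zero]
          norm_num
          rw [show k+2*m-2*1 = k+2*m-2 by omega]
          push_cast at hTU
          linarith [hTU]
        · norm_num
          exact (div_self hGKM).symm
      · have h1i : 1 ≤ i := Nat.one_le_iff_ne_zero.2 hi0
        obtain ⟨β, hβ, hβi⟩ := ih h1i (by omega)
        have hi : (0:ℝ) < (i:ℝ) := by exact_mod_cast h1i
        have hiR : ((i:ℝ)) ≠ 0 := ne_of_gt hi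
        set γ : ℕ → ℝ := fun j => β j * i / ((k:ℝ) + 2*m - 2*j + i) with hγ
        refine ⟨fun j => (if j ≤ i then γ j else 0) - (if j = 0 then 0 else γ (j-1)), ?_, ?_⟩
        · intro t
          rw [hβ t]
          have hD : ∀ j : ℕ, j ≤ i → ((k:ℝ) + 2*m - 2*j + i) ≠ 0 := by
            intro j hji
            have h2j : (2:ℝ)*j + 2 ≤ (k:ℝ) + 2*m := by
              exact_mod_cast (show 2*j+2 ≤ k+2*m by omega)
            nlinarith
          have hicast : ((i+1:ℕ):ℝ) = (i:ℝ) + 1 := by push_cast; ring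
          -- expand the new sum
          simp only [sub_mul]
          rw [Finset.sum_sub_distrib]
          rw [Finset.sum_range_succ _ (i+1), Finset.sum_range_succ' _ (i+1)]
          rw [if_neg (by omega : ¬ (i+1 ≤ i))]
          rw [if_pos rfl]
          have hA : ∑ j ∈ Finset.range (i+1),
              (if j ≤ i then γ j else 0) * gegenbauer (k+2*m-2*j) ((i+1:ℕ):ℝ) t
              = ∑ j ∈ Finset.range (i+1), γ j * gegenbauer (k+2*m-2*j) ((i+1:ℕ):ℝ) t := by
            refine Finset.sum_congr rfl ?_
            intro j hj
            rw [if_pos (by simp at hj; omega)]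
          have hB : ∑ j ∈ Finset.range (i+1),
              (if j+1 = 0 then 0 else γ (j+1-1)) * gegenbauer (k+2*m-2*(j+1)) ((i+1:ℕ):ℝ) t
              = ∑ j ∈ Finset.range (i+1), γ j * gegenbauer (k+2*m-2*(j+1)) ((i+1:ℕ):ℝ) t := by
            refine Finset.sum_congr rfl ?_
            intro j hj
            norm_num
          rw [hA, hB]
          have hC : ∑ j ∈ Finset.range (i+1), γ j * gegenbauer (k+2*m-2*j) ((i+1:ℕ):ℝ) t
              - ∑ j ∈ Finset.range (i+1), γ j * gegenbauer (k+2*m-2*(j+1)) ((i+1:ℕ):ℝ) t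
              = ∑ j ∈ Finset.range (i+1), β j * gegenbauer (k+2*m-2*j) ((i:ℕ):ℝ) t := by
            rw [← Finset.sum_sub_distrib]
            refine Finset.sum_congr rfl ?_
            intro j hj
            have hji : j ≤ i := by simp at hj; omega
            have hstep := geg_step (k+2*m-2*(j+1)) (i:ℝ) hi t
            rw [show k+2*m-2*(j+1)+2 = k+2*m-2*j by omega] at hstep
            have hcast : ((k+2*m-2*(j+1) : ℕ):ℝ) = (k:ℝ)+2*m-2*(j:ℝ)-2 := by
              rw [Nat.cast_sub (by omega)]
              push_cast; ring
            rw [hcast] at hstep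
            rw [hicast, ← mul_sub, hstep, hγ]
            have := hD j hji
            field_simp
            ring
          rw [mul_zero, zero_mul]
          linarith [hC]
        · -- last coefficient
          show (if i+1 ≤ i then γ (i+1) else 0) - (if i+1 = 0 then 0 else γ (i+1-1)) = _
          rw [if_neg (by omega : ¬ (i+1 ≤ i)), if_neg (by omega : ¬ (i+1 = 0))]
          simp only [Nat.add_sub_cancel]
          rw [hγ]
          simp only
          rw [hβi]
          have hx : (k:ℝ) + 2*m - i ≠ 0 := by
            have h2i : (i:ℝ) + 1 ≤ (k:ℝ) + 2*m := by
              exact_mod_cast (show i+1 ≤ k+2*m by omega)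
            nlinarith
          have hGi : Real.Gamma (((i+1:ℕ)):ℝ) = (i:ℝ) * Real.Gamma i := by
            rw [show (((i+1:ℕ)):ℝ) = (i:ℝ) + 1 by push_cast; ring, Real.Gamma_add_one hiR]
          have hGx : Real.Gamma ((k:ℝ) + 2*m - i + 1)
              = ((k:ℝ) + 2*m - i) * Real.Gamma ((k:ℝ) + 2*m - i) := Real.Gamma_add_one hx
          rw [hGi, hGx]
          rw [show (k:ℝ)+2*m-((i+1:ℕ):ℝ)+1 = (k:ℝ)+2*m-(i:ℝ) by push_cast; ring]
          rw [show ((k:ℝ)+2*m-2*(i:ℝ)+(i:ℝ)) = (k:ℝ)+2*m-(i:ℝ) by ring]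
          field_simp
          ring
  obtain ⟨β, hβ, hβm⟩ := main m hm le_rfl
  refine ⟨β, ?_, ?_⟩
  · intro t
    rw [hβ t]
    refine Finset.sum_congr rfl ?_
    intro j hj
    congr 2
    simp only [Finset.mem_range] at hj
    omega
  · rw [hβm]
    rw [show (k:ℝ)+2*m-(m:ℝ)+1 = (k:ℝ)+m+1 by ring]
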